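/- The restriction of the rank R-tuple map Ψ_R to the set of R-312-avoiding R-permutations is a bijection onto the set of gapless R-tuples. -/

import Mathlib

def IsUpperTuple (n : ℕ) (ν : Fin n → ℕ) : Prop :=
  ∀ i : Fin n, i.val + 1 ≤ ν i ∧ ν i ≤ n

def IsRIncr (n : ℕ) (R : Finset ℕ) (ν : Fin n → ℕ) : Prop :=
  ∀ i j : Fin n, j.val = i.val + 1 → (i.val + 1) ∉ R → ν i < ν j

def IsRIncrUpper (n : ℕ) (R : Finset ℕ) (ν : Fin n → ℕ) : Prop :=
  IsUpperTuple n ν ∧ IsRIncr n R ν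

def IsRPerm (n : ℕ) (R : Finset ℕ) (π : Equiv.Perm (Fin n)) : Prop :=
  ∀ i j : Fin n, j.val = i.val + 1 → (i.val + 1) ∉ R → π i < π j

def Avoids312 (n : ℕ) (π : Equiv.Perm (Fin n)) : Prop :=
  ¬ ∃ a b c : Fin n, a < b ∧ b < c ∧ π b < π a ∧ π b < π c ∧ π c < π a

def RAvoids312 (n : ℕ) (R : Finset ℕ) (π : Equiv.Perm (Fin n)) : Prop :=
  ¬ ∃ a b c : Fin n, a < b ∧ b < c ∧
      (∃ q ∈ R, a.val + 1 ≤ q ∧ q ≤ b.val) ∧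
      (∃ q ∈ R, b.val + 1 ≤ q ∧ q ≤ c.val) ∧
      π b < π a ∧ π b < π c ∧ π c < π a

def carrelEnd (n : ℕ) (R : Finset ℕ) (i : Fin n) : ℕ :=
  ((insert n R).filter (fun q => i.val + 1 ≤ q)).min'
    ⟨n, Finset.mem_filter.mpr ⟨Finset.mem_insert_self n R, i.isLt⟩⟩

def SameCarrel {n : ℕ} (R : Finset ℕ) (i j : Fin n) : Prop :=
  ∀ q ∈ R, ¬(i.val + 1 ≤ q ∧ q ≤ j.val)

def IsCritical (n : ℕ) (R : Finset ℕ) (ν : Fin n → ℕ) (i : Fin n) : Prop :=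
  ∀ j : Fin n, i < j → SameCarrel R i j → ν i + j.val < ν j + i.val

open Classical in
noncomputable def coreMap (n : ℕ) (R : Finset ℕ) (ν : Fin n → ℕ) (i : Fin n) : ℕ :=
  let s : Finset (Fin n) :=
    Finset.univ.filter (fun x => i ≤ x ∧ SameCarrel R i x ∧ IsCritical n R ν x)
  if h : s.Nonempty then ν (s.min' h) - ((s.min' h).val - i.val) else 0

def critList (n : ℕ) (R : Finset ℕ) (ν : Fin n → ℕ) : Set (Fin n × ℕ) :=
  {p | IsCritical n R ν p.1 ∧ p.2 = ν p.1}

def rankTuple (n : ℕ) (R : Finset ℕ) (π : Equiv.Perm (Fin n)) (i : Fin n) : ℕ :=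
  (((Finset.univ.filter (fun j : Fin n => j.val < carrelEnd n R i)).image
      (fun j => (π j).val + 1)).sort (· ≤ ·)).getD i.val 0

def GaplessCond (n : ℕ) (R : Finset ℕ) (γ : Fin n → ℕ) : Prop :=
  ∀ q : ℕ, q ∈ R → ∀ (_ : 0 < q) (h2 : q < n),
    γ ⟨q, h2⟩ < γ ⟨q - 1, by omega⟩ →
      (q + (γ ⟨q - 1, by omega⟩ - γ ⟨q, h2⟩ + 1) ≤ carrelEnd n R ⟨q, h2⟩ ∧
        ∀ t : ℕ, t < γ ⟨q - 1, by omega⟩ - γ ⟨q, h2⟩ + 1 → ∀ (ht : q + t < n),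
          γ ⟨q + t, ht⟩ =
            γ ⟨q - 1, by omega⟩ - (γ ⟨q - 1, by omega⟩ - γ ⟨q, h2⟩ + 1) + 1 + t)

def IsRProj (n : ℕ) (R : Finset ℕ) (σ π : Equiv.Perm (Fin n)) : Prop :=
  IsRPerm n R π ∧ ∀ q ∈ R,
    (Finset.univ.filter (fun j : Fin n => j.val < q)).image (fun j => σ j) =
    (Finset.univ.filter (fun j : Fin n => j.val < q)).image (fun j => π j)

namespace Stmt7

/-- The `k`-th smallest element (0-indexed) of a finset of naturals. -/
def nth (s : Finset ℕ) (k : ℕ) : ℕ := (s.sort (· ≤ ·)).getD k 0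

lemma nth_def (s : Finset ℕ) {k : ℕ} (hk : k < s.card) :
    nth s k = (s.sort (· ≤ ·)).get ⟨k, by rwa [Finset.length_sort]⟩ := by
  rw [nth, List.getD_eq_getElem _ _ (by rwa [Finset.length_sort])]
  simp

lemma nth_mem (s : Finset ℕ) {k : ℕ} (hk : k < s.card) : nth s k ∈ s := by
  rw [nth_def s hk]
  apply (Finset.mem_sort (α := ℕ) (· ≤ ·)).1
  exact List.get_mem _ _

lemma nth_lt_nth (s : Finset ℕ) {k l : ℕ} (hkl : k < l) (hl : l < s.card) :
    nth s k < nth s l := by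
  rw [nth_def s (hkl.trans hl), nth_def s hl]
  exact (Finset.sortedLT_sort s).strictMono_get hkl

lemma card_filter_lt_nth (s : Finset ℕ) {k : ℕ} (hk : k < s.card) :
    (s.filter (· < nth s k)).card = k := by
  classical
  have hlen : (s.sort (· ≤ ·)).length = s.card := Finset.length_sort _
  -- the elements less than nth s k are exactly the first k entries of sort
  have : s.filter (· < nth s k) = ((s.sort (· ≤ ·)).take k).toFinset := by
    ext x
    simp only [Finset.mem_filter, List.mem_toFinset]
    constructor
    · rintro ⟨hxs, hxlt⟩
      have hx : x ∈ s.sort (· ≤ ·) := (Finset.mem_sort _).2 hxs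
      obtain ⟨⟨i, hi⟩, rfl⟩ := List.mem_iff_get.1 hx
      have hik : i < k := by
        by_contra h
        push_neg at h
        rcases eq_or_lt_of_le h with h' | h'
        · subst h'; rw [nth_def s hk] at hxlt; simp at hxlt
        · have := (Finset.sortedLT_sort s).strictMono_get
            (show (⟨k, by omega⟩ : Fin (s.sort (· ≤ ·)).length) < ⟨i, hi⟩ from h')
          rw [nth_def s hk] at hxlt
          omega
      exact List.mem_take_iff_getElem.2 ⟨i, by omega, by simp⟩
    · intro hx
      obtain ⟨i, hi, rfl⟩ := List.mem_take_iff_getElem.1 hx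
      have hik : i < k := by omega
      constructor
      · exact (Finset.mem_sort (α := ℕ) (· ≤ ·)).1 (List.getElem_mem _)
      · have := (Finset.sortedLT_sort s).strictMono_get
          (show (⟨i, by omega⟩ : Fin (s.sort (· ≤ ·)).length) < ⟨k, by omega⟩ from hik)
        rw [nth_def s hk]
        simpa using this
  rw [this, List.toFinset_card_of_nodup (List.Nodup.sublist (List.take_sublist _ _)
    (Finset.sort_nodup _ _)), List.length_take, hlen]
  omega

lemma card_filter_lt_lt {s : Finset ℕ} {a b : ℕ} (ha : a ∈ s) (hab : a < b) :
    (s.filter (· < a)).card < (s.filter (· < b)).card := by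
  classical
  apply Finset.card_lt_card
  constructor
  · intro y hy
    simp only [Finset.mem_filter] at hy ⊢
    exact ⟨hy.1, by omega⟩
  · intro hsub
    have := hsub (Finset.mem_filter.2 ⟨ha, hab⟩)
    simp only [Finset.mem_filter] at this
    omega

lemma nth_eq_of_card_filter_lt {s : Finset ℕ} {x k : ℕ} (hx : x ∈ s)
    (h : (s.filter (· < x)).card = k) : nth s k = x := by
  classical
  have hk : k < s.card := by
    rw [← h]
    apply Finset.card_lt_card
    constructor
    · exact Finset.filter_subset _ _
    · intro hsub
      have := hsub hx
      simp only [Finset.mem_filter] at this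
      omega
  have hmem := nth_mem s hk
  have hcard := card_filter_lt_nth s hk
  rcases lt_trichotomy (nth s k) x with h' | h' | h'
  · have := card_filter_lt_lt hmem h'
    omega
  · exact h'
  · have := card_filter_lt_lt hx h'
    omega

/-- The `k` largest elements of `M`. -/
def topk (M : Finset ℕ) (k : ℕ) : Finset ℕ :=
  (Finset.Ico (M.card - k) M.card).image (nth M)

lemma topk_subset (M : Finset ℕ) (k : ℕ) : topk M k ⊆ M := by
  intro x hx
  obtain ⟨t, ht, rfl⟩ := Finset.mem_image.1 hx
  exact nth_mem M (Finset.mem_Ico.1 ht).2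

lemma card_topk (M : Finset ℕ) {k : ℕ} (hk : k ≤ M.card) : (topk M k).card = k := by
  unfold topk
  rw [Finset.card_image_of_injOn, Nat.card_Ico]
  · omega
  · intro a ha b hb hab
    simp only [Finset.coe_Ico, Set.mem_Ico] at ha hb
    by_contra hne
    rcases lt_or_gt_of_ne hne with h | h
    · have := nth_lt_nth M h hb.2; omega
    · have := nth_lt_nth M h ha.2; omega

lemma lt_of_not_mem_topk {M : Finset ℕ} {k x y : ℕ} (hx : x ∈ M) (hxk : x ∉ topk M k)
    (hy : y ∈ topk M k) : x < y := by
  classical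
  have hxt : nth M ((M.filter (· < x)).card) = x := nth_eq_of_card_filter_lt hx rfl
  set t := (M.filter (· < x)).card with htdef
  have htlt : t < M.card := by
    apply Finset.card_lt_card
    refine ⟨Finset.filter_subset _ _, fun hsub => ?_⟩
    have := hsub hx
    simp only [Finset.mem_filter] at this
    omega
  have ht : t < M.card - k := by
    by_contra hge
    push_neg at hge
    exact hxk (Finset.mem_image.2 ⟨t, Finset.mem_Ico.2 ⟨hge, htlt⟩, hxt⟩)
  obtain ⟨t', ht', rfl⟩ := Finset.mem_image.1 hy
  rw [← hxt]
  exact nth_lt_nth M (by have := Finset.mem_Ico.1 ht'; omega) (Finset.mem_Ico.1 ht').2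


variable {n : ℕ} {R : Finset ℕ}

lemma lt_carrelEnd (i : Fin n) : i.val < carrelEnd n R i := by
  have := Finset.min'_mem ((insert n R).filter (fun q => i.val + 1 ≤ q))
    ⟨n, Finset.mem_filter.mpr ⟨Finset.mem_insert_self n R, i.isLt⟩⟩
  rw [Finset.mem_filter] at this
  exact this.2

lemma carrelEnd_mem (i : Fin n) : carrelEnd n R i ∈ insert n R := by
  have := Finset.min'_mem ((insert n R).filter (fun q => i.val + 1 ≤ q))
    ⟨n, Finset.mem_filter.mpr ⟨Finset.mem_insert_self n R, i.isLt⟩⟩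
  rw [Finset.mem_filter] at this
  exact this.1

lemma carrelEnd_le {i : Fin n} {q : ℕ} (hq : q ∈ insert n R) (hiq : i.val < q) :
    carrelEnd n R i ≤ q :=
  Finset.min'_le _ _ (Finset.mem_filter.mpr ⟨hq, hiq⟩)

lemma carrelEnd_le_n (i : Fin n) : carrelEnd n R i ≤ n :=
  carrelEnd_le (Finset.mem_insert_self n R) i.isLt

/-- the previous cut before `q`. -/
def prevCut (R : Finset ℕ) (q : ℕ) : ℕ := WithBot.unbotD 0 (((insert 0 R).filter (· < q)).max)

lemma prevCut_lt {q : ℕ} (hq : 0 < q) : prevCut R q < q := by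
  unfold prevCut
  have hne : ((insert 0 R).filter (· < q)).Nonempty :=
    ⟨0, Finset.mem_filter.mpr ⟨Finset.mem_insert_self 0 R, hq⟩⟩
  obtain ⟨b, hb⟩ := Finset.max_of_nonempty hne
  rw [hb]
  have := Finset.mem_filter.1 (Finset.mem_of_max hb)
  simpa using this.2

lemma prevCut_mem {q : ℕ} (hq : 0 < q) : prevCut R q ∈ insert 0 R := by
  unfold prevCut
  have hne : ((insert 0 R).filter (· < q)).Nonempty :=
    ⟨0, Finset.mem_filter.mpr ⟨Finset.mem_insert_self 0 R, hq⟩⟩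
  obtain ⟨b, hb⟩ := Finset.max_of_nonempty hne
  rw [hb]
  exact (Finset.mem_filter.1 (Finset.mem_of_max hb)).1

lemma le_prevCut {q c : ℕ} (hc : c ∈ insert 0 R) (hcq : c < q) : c ≤ prevCut R q := by
  unfold prevCut
  have hcm : c ∈ (insert 0 R).filter (· < q) := Finset.mem_filter.mpr ⟨hc, hcq⟩
  have h := Finset.le_max hcm
  obtain ⟨b, hb⟩ := Finset.max_of_nonempty (⟨c, hcm⟩ : ((insert 0 R).filter (· < q)).Nonempty)
  rw [hb] at h ⊢
  exact_mod_cast h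

/-- no cut strictly between `prevCut q` and `q`. -/
lemma no_cut_between (hR : R ⊆ Finset.Ico 1 n) {q c : ℕ} (hq : 0 < q) (hqn : q ≤ n)
    (hc : c ∈ R) (h1 : prevCut R q < c) : q ≤ c := by
  by_contra h
  push_neg at h
  exact absurd (le_prevCut (Finset.mem_insert_of_mem hc) h) (by omega)

lemma prevCut_le_self {q : ℕ} (hq : 0 < q) : prevCut R q ≤ q := le_of_lt (prevCut_lt hq)

lemma prevCut_carrelEnd_le (i : Fin n) : prevCut R (carrelEnd n R i) ≤ i.val := by
  have h0 : 0 < carrelEnd n R i := lt_of_le_of_lt (Nat.zero_le _) (lt_carrelEnd i)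
  have hmem := prevCut_mem (R := R) h0
  rcases Finset.mem_insert.1 hmem with h | h
  · omega
  · by_contra hcon
    push_neg at hcon
    have : carrelEnd n R i ≤ prevCut R (carrelEnd n R i) :=
      carrelEnd_le (Finset.mem_insert_of_mem h) hcon
    have := prevCut_lt (R := R) h0
    omega

/-- every position in `[prevCut q, q)` has carrel end `q`, for a cut `q`. -/
lemma carrelEnd_eq_of {q : ℕ} (hq : q ∈ insert n R) (hqn : q ≤ n) {i : Fin n}
    (h1 : prevCut R q ≤ i.val) (h2 : i.val < q) : carrelEnd n R i = q := by
  have hle : carrelEnd n R i ≤ q := carrelEnd_le hq h2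
  by_contra hne
  have hlt : carrelEnd n R i < q := lt_of_le_of_ne hle hne
  have hmem := carrelEnd_mem (R := R) i
  rcases Finset.mem_insert.1 hmem with h | h
  · omega
  · have h5 := le_prevCut (R := R) (Finset.mem_insert_of_mem h) hlt
    have h6 := lt_carrelEnd (R := R) i
    omega


def vals {n : ℕ} (π : Equiv.Perm (Fin n)) (q : ℕ) : Finset ℕ :=
  (Finset.univ.filter (fun j : Fin n => j.val < q)).image (fun j => (π j).val + 1)

variable {n : ℕ} {π : Equiv.Perm (Fin n)}

lemma mem_vals {v q : ℕ} : v ∈ vals π q ↔ ∃ j : Fin n, j.val < q ∧ (π j).val + 1 = v := by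
  unfold vals
  simp only [Finset.mem_image, Finset.mem_filter, Finset.mem_univ, true_and]

lemma card_vals {q : ℕ} (hq : q ≤ n) : (vals π q).card = q := by
  unfold vals
  rw [Finset.card_image_of_injective _ (fun a b hab => by
    have : π a = π b := by
      apply Fin.val_injective
      omega
    exact π.injective this)]
  have : Finset.univ.filter (fun j : Fin n => j.val < q) =
      (Finset.range q).attachFin (fun m hm => lt_of_lt_of_le (Finset.mem_range.1 hm) hq) := by
    ext j
    simp [Finset.mem_attachFin]
  rw [this, Finset.card_attachFin, Finset.card_range]

lemma vals_subset_Icc {q : ℕ} : vals π q ⊆ Finset.Icc 1 n := by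
  intro v hv
  obtain ⟨j, _, rfl⟩ := mem_vals.1 hv
  simp only [Finset.mem_Icc]
  have := (π j).isLt
  omega

lemma vals_mono {q q' : ℕ} (h : q ≤ q') : vals π q ⊆ vals π q' := by
  intro v hv
  obtain ⟨j, hj, rfl⟩ := mem_vals.1 hv
  exact mem_vals.2 ⟨j, by omega, rfl⟩

lemma mem_vals_of_lt {q : ℕ} {j : Fin n} (hj : j.val < q) : (π j).val + 1 ∈ vals π q :=
  mem_vals.2 ⟨j, hj, rfl⟩

lemma not_mem_vals {q : ℕ} {j : Fin n} (hj : q ≤ j.val) : (π j).val + 1 ∉ vals π q := by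
  intro hv
  obtain ⟨j', hj', hv'⟩ := mem_vals.1 hv
  have : π j' = π j := by apply Fin.val_injective; omega
  have := π.injective this
  subst this
  omega

lemma exists_of_not_mem_vals {q v : ℕ} (h1 : 1 ≤ v) (h2 : v ≤ n) (h3 : v ∉ vals π q) :
    ∃ c : Fin n, q ≤ c.val ∧ (π c).val + 1 = v := by
  set c := π.symm ⟨v - 1, by omega⟩ with hc
  have hπc : (π c).val + 1 = v := by
    rw [hc, Equiv.apply_symm_apply]
    simp only []
    show (v-1) + 1 = v
    omega
  refine ⟨c, ?_, hπc⟩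
  by_contra h
  push_neg at h
  exact h3 (hπc ▸ mem_vals_of_lt h)


lemma nth_le_nth (s : Finset ℕ) {k l : ℕ} (hkl : k ≤ l) (hl : l < s.card) :
    nth s k ≤ nth s l := by
  rcases eq_or_lt_of_le hkl with rfl | h
  · exact le_refl _
  · exact le_of_lt (nth_lt_nth s h hl)

lemma exists_nth_eq {s : Finset ℕ} {v : ℕ} (hv : v ∈ s) :
    ∃ t, t < s.card ∧ nth s t = v ∧ (s.filter (· < v)).card = t := by
  refine ⟨(s.filter (· < v)).card, ?_, nth_eq_of_card_filter_lt hv rfl, rfl⟩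
  apply Finset.card_lt_card
  refine ⟨Finset.filter_subset _ _, fun hsub => ?_⟩
  have := hsub hv
  simp only [Finset.mem_filter] at this
  omega

lemma le_nth_last {s : Finset ℕ} {v : ℕ} (hv : v ∈ s) : v ≤ nth s (s.card - 1) := by
  obtain ⟨t, ht, rfl, -⟩ := exists_nth_eq hv
  exact nth_le_nth s (by omega) (by omega)

lemma add_one_le_nth {s : Finset ℕ} (hs : ∀ x ∈ s, 1 ≤ x) {k : ℕ} (hk : k < s.card) :
    k + 1 ≤ nth s k := by
  induction k with
  | zero => exact hs _ (nth_mem s hk)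
  | succ k ih =>
    have h1 := ih (by omega)
    have h2 : nth s k < nth s (k + 1) := nth_lt_nth s (Nat.lt_succ_self k) hk
    omega

variable {π : Equiv.Perm (Fin n)}

lemma rankTuple_eq (i : Fin n) :
    rankTuple n R π i = nth (vals π (carrelEnd n R i)) i.val := rfl

lemma lt_card_vals_carrelEnd (i : Fin n) : i.val < (vals π (carrelEnd n R i)).card := by
  rw [card_vals (carrelEnd_le_n i)]
  exact lt_carrelEnd i

lemma psi_upper (i : Fin n) :
    i.val + 1 ≤ rankTuple n R π i ∧ rankTuple n R π i ≤ n := by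
  rw [rankTuple_eq]
  constructor
  · exact add_one_le_nth (fun x hx => (Finset.mem_Icc.1 (vals_subset_Icc hx)).1)
      (lt_card_vals_carrelEnd i)
  · exact (Finset.mem_Icc.1 (vals_subset_Icc (nth_mem _ (lt_card_vals_carrelEnd i)))).2

lemma carrelEnd_succ {i j : Fin n} (hij : j.val = i.val + 1) (hR' : (i.val + 1) ∉ R) :
    carrelEnd n R j = carrelEnd n R i := by
  unfold carrelEnd
  congr 1
  ext q
  simp only [Finset.mem_filter, Finset.mem_insert]
  constructor
  · rintro ⟨h1, h2⟩; exact ⟨h1, by omega⟩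
  · rintro ⟨h1, h2⟩
    refine ⟨h1, ?_⟩
    rcases h1 with rfl | h1
    · have := j.isLt; omega
    · have : q ≠ i.val + 1 := fun h => hR' (h ▸ h1)
      omega

lemma psi_incr {i j : Fin n} (hij : j.val = i.val + 1) (hR' : (i.val + 1) ∉ R) :
    rankTuple n R π i < rankTuple n R π j := by
  rw [rankTuple_eq, rankTuple_eq, carrelEnd_succ hij hR']
  have h := lt_carrelEnd (R := R) j
  rw [carrelEnd_succ hij hR'] at h
  exact nth_lt_nth _ (by omega) (by rw [card_vals (carrelEnd_le_n i)]; omega)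

lemma carrelEnd_eq_same {i j : Fin n} (hij : i.val ≤ j.val) (hj : j.val < carrelEnd n R i) :
    carrelEnd n R j = carrelEnd n R i := by
  apply le_antisymm
  · exact carrelEnd_le (carrelEnd_mem i) hj
  · exact carrelEnd_le (carrelEnd_mem j) (lt_of_le_of_lt hij (lt_carrelEnd j))

lemma psi_gapless (hav : RAvoids312 n R π) :
    GaplessCond n R (rankTuple n R π) := by
  intro q hq h1 h2 hdrop
  have i1lt : q - 1 < n := by omega
  set γ := rankTuple n R π with hγ
  set i1 : Fin n := ⟨q - 1, i1lt⟩ with hi1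
  set i2 : Fin n := ⟨q, h2⟩ with hi2
  have hqmem : q ∈ insert n R := Finset.mem_insert_of_mem hq
  have hprev : prevCut R q < q := prevCut_lt h1
  have hE1 : carrelEnd n R i1 = q :=
    carrelEnd_eq_of hqmem (by omega) (by show prevCut R q ≤ q - 1; omega) (by show q - 1 < q; omega)
  set E' := carrelEnd n R i2 with hE'
  have hqE' : q < E' := lt_carrelEnd i2
  have hE'n : E' ≤ n := carrelEnd_le_n i2
  set A := vals π q with hA
  set B := vals π E' with hB
  have hAB : A ⊆ B := vals_mono (le_of_lt hqE')
  have hcardA : A.card = q := card_vals (by omega)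
  have hcardB : B.card = E' := card_vals hE'n
  set m := γ i1 with hm
  set g := γ i2 with hg
  have hmval : m = nth A (q - 1) := by
    rw [hm, hγ, rankTuple_eq, hE1]
  have hgval : g = nth B q := by
    rw [hg, hγ, rankTuple_eq]
  have hgm : g < m := hdrop
  have hmmem : m ∈ A := hmval ▸ nth_mem A (by omega)
  have hmmax : ∀ v ∈ A, v ≤ m := by
    intro v hv
    have h := le_nth_last hv
    rw [hcardA] at h
    rwa [← hmval] at h
  have hgmem : g ∈ B := hgval ▸ nth_mem B (by omega)
  have hg1 : 1 ≤ g := (Finset.mem_Icc.1 (vals_subset_Icc hgmem)).1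
  have hmn : m ≤ n := (Finset.mem_Icc.1 (vals_subset_Icc (hAB hmmem))).2
  have count_lt_g : (B.filter (· < g)).card = q := by
    rw [hgval]
    exact card_filter_lt_nth B (by omega)
  have hmain : ∀ v, g ≤ v → v ≤ m → v ∈ B := by
    intro v hvg hvm
    by_contra hvB
    have hvg' : g < v := lt_of_le_of_ne hvg (fun h => hvB (h ▸ hgmem))
    have hvm' : v < m := lt_of_le_of_ne hvm (fun h => hvB (h ▸ hAB hmmem))
    obtain ⟨c, hc1, hc2⟩ := exists_of_not_mem_vals (by omega) (by omega) hvB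
    have hexy : ∃ y ∈ B.filter (· < g), y ∉ A := by
      by_contra hno
      push_neg at hno
      have hsub : B.filter (· < g) ⊆ A.erase m := by
        intro y hy
        refine Finset.mem_erase.2 ⟨?_, hno y hy⟩
        have := (Finset.mem_filter.1 hy).2
        omega
      have hcc := Finset.card_le_card hsub
      rw [count_lt_g, Finset.card_erase_of_mem hmmem, hcardA] at hcc
      omega
    obtain ⟨y, hyF, hyA⟩ := hexy
    rw [Finset.mem_filter] at hyF
    obtain ⟨b, hb1, hb2⟩ := mem_vals.1 hyF.1
    have hyg : y < g := hyF.2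
    have hbq : q ≤ b.val := by
      by_contra hh
      push_neg at hh
      exact hyA (hb2 ▸ mem_vals_of_lt hh)
    obtain ⟨a, ha1, ha2⟩ := mem_vals.1 hmmem
    apply hav
    have hE'R : E' ∈ R := by
      rcases Finset.mem_insert.1 (carrelEnd_mem (R := R) i2) with h | h
      · exfalso
        have := c.isLt
        omega
      · exact h
    refine ⟨a, b, c, ?_, ?_, ⟨q, hq, by omega⟩, ⟨E', hE'R, by omega⟩, ?_, ?_, ?_⟩
    · exact Fin.lt_def.2 (by omega)
    · exact Fin.lt_def.2 (by omega)
    · exact Fin.lt_def.2 (by omega)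
    · exact Fin.lt_def.2 (by omega)
    · exact Fin.lt_def.2 (by omega)
  have hcount : ∀ t, t ≤ m - g → (B.filter (· < g + t)).card = q + t := by
    intro t ht
    have hun : B.filter (· < g + t) = B.filter (· < g) ∪ Finset.Ico g (g + t) := by
      ext x
      simp only [Finset.mem_union, Finset.mem_filter, Finset.mem_Ico]
      constructor
      · rintro ⟨hx1, hx2⟩
        by_cases hxg : x < g
        · exact Or.inl ⟨hx1, hxg⟩
        · exact Or.inr ⟨by omega, hx2⟩
      · rintro (⟨hx1, hx2⟩ | ⟨hx1, hx2⟩)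
        · exact ⟨hx1, by omega⟩
        · exact ⟨hmain x hx1 (by omega), hx2⟩
    rw [hun, Finset.card_union_of_disjoint, count_lt_g, Nat.card_Ico]
    · omega
    · rw [Finset.disjoint_left]
      intro x hx hx'
      simp only [Finset.mem_filter] at hx
      simp only [Finset.mem_Ico] at hx'
      omega
  have hnth_run : ∀ t, t ≤ m - g → nth B (q + t) = g + t := by
    intro t ht
    exact nth_eq_of_card_filter_lt (hmain (g + t) (by omega) (by omega)) (hcount t ht)
  have hkey : q + (m - g) + 1 ≤ E' := by
    have hc1 : (B.filter (· < m)).card = q + (m - g) := by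
      have h := hcount (m - g) (le_refl _)
      have : g + (m - g) = m := by omega
      rwa [this] at h
    have hsub2 : B.filter (· < m) ⊆ B.erase m := by
      intro x hx
      rw [Finset.mem_erase]
      have h := Finset.mem_filter.1 hx
      exact ⟨by omega, h.1⟩
    have h3 := Finset.card_le_card hsub2
    rw [hc1, Finset.card_erase_of_mem (hAB hmmem), hcardB] at h3
    omega
  constructor
  · show q + (m - g + 1) ≤ E'
    omega
  · show ∀ t : ℕ, t < m - g + 1 → ∀ (ht : q + t < n),
      γ ⟨q + t, ht⟩ = m - (m - g + 1) + 1 + t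
    intro t htlt ht
    have hrhs : m - (m - g + 1) + 1 + t = g + t := by omega
    rw [hrhs]
    have hqtE : q + t < E' := by omega
    have hEt : carrelEnd n R ⟨q + t, ht⟩ = E' :=
      carrelEnd_eq_same (i := i2) (by show q ≤ q + t; omega) (by show q + t < E'; exact hqtE)
    rw [hγ, rankTuple_eq, hEt]
    exact hnth_run t (by omega)

section Chain

variable (γ : Fin n → ℕ)

lemma gamma_lt_carrel (hinc : IsRIncr n R γ) :
    ∀ d : ℕ, ∀ i j : Fin n, j.val = i.val + d + 1 →
      (∀ c ∈ R, ¬(i.val < c ∧ c ≤ j.val)) → γ i < γ j := by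
  intro d
  induction d with
  | zero =>
    intro i j hj hc
    exact hinc i j (by omega) (fun h => hc _ h ⟨by omega, by omega⟩)
  | succ d ih =>
    intro i j hj hc
    have hj' : i.val + d + 1 < n := by have := j.isLt; omega
    set j' : Fin n := ⟨i.val + d + 1, hj'⟩ with hj'def
    have h1 := ih i j' rfl (fun c hc' hcc => hc c hc' ⟨hcc.1, by
      have : c ≤ j'.val := hcc.2
      simp only [hj'def] at this
      omega⟩)
    have h2 := hinc j' j (by simp [hj'def]; omega) (fun h => hc _ h ⟨by simp [hj'def] at h ⊢; omega,
      by simp [hj'def] at h ⊢; omega⟩)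
    omega

/-- γ restricted to one carrel is strictly increasing: positions in `[p,q)` with
no cut of `R` in `(p, q)`. -/
lemma gamma_lt_of_carrel (hinc : IsRIncr n R γ) {p q : ℕ} (hpq : p = prevCut R q)
    {i j : Fin n} (hpi : p ≤ i.val) (hij : i.val < j.val) (hjq : j.val < q) : γ i < γ j := by
  apply gamma_lt_carrel γ hinc (j.val - i.val - 1) i j (by omega)
  intro c hc hcc
  have : c ≤ prevCut R q := le_prevCut (Finset.mem_insert_of_mem hc) (by omega)
  omega

/-- the image of γ over positions `[p, q)`. -/
def carrelT (p q : ℕ) : Finset ℕ :=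
  (Finset.univ.filter (fun i : Fin n => p ≤ i.val ∧ i.val < q)).image γ

lemma mem_carrelT {p q x : ℕ} :
    x ∈ carrelT γ p q ↔ ∃ i : Fin n, p ≤ i.val ∧ i.val < q ∧ γ i = x := by
  unfold carrelT
  simp only [Finset.mem_image, Finset.mem_filter, Finset.mem_univ, true_and]
  constructor
  · rintro ⟨i, ⟨h1, h2⟩, h3⟩; exact ⟨i, h1, h2, h3⟩
  · rintro ⟨i, h1, h2, h3⟩; exact ⟨i, ⟨h1, h2⟩, h3⟩

lemma card_filter_Ico_pos {p q : ℕ} (hq : q ≤ n) :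
    (Finset.univ.filter (fun i : Fin n => p ≤ i.val ∧ i.val < q)).card = q - p := by
  have : Finset.univ.filter (fun i : Fin n => p ≤ i.val ∧ i.val < q) =
      (Finset.Ico p q).attachFin (fun m hm => by
        have := Finset.mem_Ico.1 hm; omega) := by
    ext j
    simp [Finset.mem_attachFin]
  rw [this, Finset.card_attachFin, Nat.card_Ico]

lemma card_carrelT_gen (hinc : IsRIncr n R γ) {p q : ℕ} (hpq : p = prevCut R q) {r : ℕ}
    (hrq : r ≤ q) (hrn : r ≤ n) : (carrelT γ p r).card = r - p := by
  unfold carrelT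
  rw [Finset.card_image_of_injOn, card_filter_Ico_pos hrn]
  intro a ha b hb hab
  simp only [Finset.coe_filter, Set.mem_setOf_eq, Finset.mem_univ, true_and] at ha hb
  by_contra hne
  have hne' : a.val ≠ b.val := fun h => hne (Fin.val_injective h)
  rcases lt_or_gt_of_ne hne' with h | h
  · have := gamma_lt_of_carrel γ hinc hpq ha.1 h (by omega); omega
  · have := gamma_lt_of_carrel γ hinc hpq hb.1 h (by omega); omega

noncomputable def chainFn (R : Finset ℕ) (γ : Fin n → ℕ) : ℕ → Finset ℕ := fun q =>
  if h : q = 0 then ∅ else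
    have hd : prevCut R q < q := prevCut_lt (Nat.pos_of_ne_zero h)
    let p := prevCut R q
    let C := chainFn R γ p
    let T := carrelT γ p q
    let low := if hp : p < n then γ ⟨p, hp⟩ else 0
    C ∪ T ∪ topk ((Finset.Ico 1 low) \ (C ∪ T)) ((C ∩ T).card)
  termination_by q => q

lemma chainFn_zero : chainFn R γ 0 = ∅ := by
  rw [chainFn]
  simp

lemma chainFn_pos {q : ℕ} (h : q ≠ 0) (hp : prevCut R q < n) :
    chainFn R γ q =
      chainFn R γ (prevCut R q) ∪ carrelT γ (prevCut R q) q ∪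
        topk ((Finset.Ico 1 (γ ⟨prevCut R q, hp⟩)) \
          (chainFn R γ (prevCut R q) ∪ carrelT γ (prevCut R q) q))
          ((chainFn R γ (prevCut R q) ∩ carrelT γ (prevCut R q) q).card) := by
  conv_lhs => rw [chainFn]
  simp [h, hp]

end Chain

section ChainInv

variable {γ : Fin n → ℕ}

lemma prevCut_zero : prevCut R 0 = 0 := by
  unfold prevCut
  have : (insert 0 R).filter (· < 0) = ∅ := by
    ext x
    simp
  rw [this]
  rfl

/-- the "run" property from gaplessness: integers between `γ p` and `γ (p-1)`
all appear as `γ` values in the carrel `[p, q)`. -/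
lemma run_subset (hgap : GaplessCond n R γ) {p q : ℕ} (hpq : p = prevCut R q)
    (hq : q ∈ insert n R) (hqn : q ≤ n) (hpR : p ∈ R) (hp0 : 0 < p) (hpn : p < n)
    (hp1n : p - 1 < n) (hb1 : 1 ≤ γ ⟨p, hpn⟩) {z : ℕ} (hz1 : γ ⟨p, hpn⟩ ≤ z)
    (hz2 : z ≤ γ ⟨p - 1, hp1n⟩) :
    z ∈ carrelT γ p q := by
  have hq0' : 0 < q := by
    rcases Nat.eq_zero_or_pos q with h | h
    · rw [h, prevCut_zero] at hpq
      omega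
    · exact h
  have hpltq : p < q := hpq ▸ prevCut_lt hq0'
  have hEq : carrelEnd n R ⟨p, hpn⟩ = q :=
    carrelEnd_eq_of hq hqn (by show prevCut R q ≤ p; omega) (by show p < q; omega)
  rcases lt_trichotomy (γ ⟨p, hpn⟩) (γ ⟨p - 1, hp1n⟩) with hd | hd | hd
  · have hgp := hgap p hpR hp0 hpn hd
    have hA : p + (γ ⟨p - 1, hp1n⟩ - γ ⟨p, hpn⟩ + 1) ≤ carrelEnd n R ⟨p, hpn⟩ := hgp.1
    have hB : ∀ t : ℕ, t < γ ⟨p - 1, hp1n⟩ - γ ⟨p, hpn⟩ + 1 → ∀ (ht : p + t < n),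
        γ ⟨p + t, ht⟩ = γ ⟨p - 1, hp1n⟩ - (γ ⟨p - 1, hp1n⟩ - γ ⟨p, hpn⟩ + 1) + 1 + t := hgp.2
    set a := γ ⟨p - 1, hp1n⟩ with ha
    set b := γ ⟨p, hpn⟩ with hb
    set t := z - b with htdef
    have htlt : t < a - b + 1 := by omega
    have hEn : carrelEnd n R ⟨p, hpn⟩ ≤ n := carrelEnd_le_n _
    have hptn : p + t < n := by omega
    have hval := hB t htlt hptn
    refine (mem_carrelT _).2 ⟨⟨p + t, hptn⟩, by simp, ?_, ?_⟩
    · show p + t < q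
      omega
    · show γ ⟨p + t, hptn⟩ = z
      omega
  · exact (mem_carrelT _).2 ⟨⟨p, hpn⟩, by simp, by show p < q; omega,
      le_antisymm hz1 (by rw [hd]; exact hz2)⟩
  · exfalso
    omega

lemma chain_inv (hup : IsUpperTuple n γ) (hinc : IsRIncr n R γ) (hgap : GaplessCond n R γ)
    (hR : R ⊆ Finset.Ico 1 n) :
    ∀ q, (q = 0 ∨ q ∈ insert n R) →
      (chainFn R γ q).card = q ∧
      (chainFn R γ q ⊆ Finset.Icc 1 n) ∧
      (∀ i : Fin n, prevCut R q ≤ i.val → i.val < q → nth (chainFn R γ q) i.val = γ i) ∧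
      (∀ x ∈ chainFn R γ q, ∀ h1 : q - 1 < n, x ≤ γ ⟨q - 1, h1⟩) ∧
      chainFn R γ (prevCut R q) ⊆ chainFn R γ q := by
  intro q
  induction q using Nat.strong_induction_on with
  | _ q IH =>
  intro hcut
  by_cases hq0 : q = 0
  · subst hq0
    rw [prevCut_zero, chainFn_zero]
    refine ⟨by simp, by simp, ?_, by simp, by simp⟩
    intro i _ h2
    omega
  · have hqmem : q ∈ insert n R := hcut.resolve_left hq0
    have hqn : q ≤ n := by
      rcases Finset.mem_insert.1 hqmem with h | h
      · omega
      · have := hR h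
        simp only [Finset.mem_Ico] at this
        omega
    have h0 : 0 < q := Nat.pos_of_ne_zero hq0
    set p := prevCut R q with hpdef
    have hplt : p < q := prevCut_lt h0
    have hpn : p < n := by omega
    have hpcut : p = 0 ∨ p ∈ insert n R := by
      rcases Finset.mem_insert.1 (prevCut_mem (R := R) h0) with h | h
      · exact Or.inl h
      · exact Or.inr (Finset.mem_insert_of_mem h)
    obtain ⟨ihcard, ihicc, ihnth, ihmax, -⟩ := IH p hplt hpcut
    set C := chainFn R γ p with hCdef
    set T := carrelT γ p q with hTdef
    set low := γ ⟨p, hpn⟩ with hlowdef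
    set M' := (Finset.Ico 1 low) \ (C ∪ T) with hM'def
    set k := (C ∩ T).card with hkdef
    set X := topk M' k with hXdef
    have hD : chainFn R γ q = C ∪ T ∪ X := chainFn_pos γ hq0 hpn
    -- basic facts about T
    have hTlow : ∀ x ∈ T, low ≤ x := by
      intro x hx
      obtain ⟨i, hi1, hi2, rfl⟩ := (mem_carrelT _).1 hx
      rcases eq_or_lt_of_le hi1 with h | h
      · have : (⟨p, hpn⟩ : Fin n) = i := Fin.val_injective h
        rw [hlowdef, this]
      · exact le_of_lt (gamma_lt_of_carrel γ hinc hpdef (by simp) h hi2)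
    have hTicc : T ⊆ Finset.Icc 1 n := by
      intro x hx
      obtain ⟨i, _, _, rfl⟩ := (mem_carrelT _).1 hx
      have := hup i
      simp only [Finset.mem_Icc]
      omega
    have hcardT : T.card = q - p := card_carrelT_gen γ hinc hpdef (le_refl q) hqn
    -- F2 : elements of C at least low are in T
    have hF2 : ∀ x ∈ C, low ≤ x → x ∈ T := by
      intro x hx hlx
      have hp0 : 0 < p := by
        by_contra hh
        push_neg at hh
        have hCe : C = ∅ := by rw [hCdef, show p = 0 by omega, chainFn_zero]
        rw [hCe] at hx
        simp at hx
      have hpR : p ∈ R := by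
        rcases Finset.mem_insert.1 (prevCut_mem (R := R) h0) with h | h
        · omega
        · exact h
      have hxmax := ihmax x hx (by omega)
      exact run_subset hgap hpdef hqmem hqn hpR hp0 hpn (by omega)
        (by have := (hup ⟨p, hpn⟩).1; omega) hlx hxmax
    -- counting
    have hkp : k ≤ p := by
      rw [hkdef, ← ihcard]
      exact Finset.card_le_card (Finset.inter_subset_left)
    have hinter : (Finset.Ico 1 low) ∩ (C ∪ T) = C \ T := by
      ext x
      simp only [Finset.mem_inter, Finset.mem_Ico, Finset.mem_union, Finset.mem_sdiff]
      constructor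
      · rintro ⟨⟨hx1, hx2⟩, hx3 | hx3⟩
        · refine ⟨hx3, fun hxt => ?_⟩
          have := hTlow x hxt
          omega
        · have := hTlow x hx3
          omega
      · rintro ⟨hx1, hx2⟩
        have hx1' := Finset.mem_Icc.1 (ihicc hx1)
        have hxlow : x < low := by
          by_contra hh
          push_neg at hh
          exact hx2 (hF2 x hx1 hh)
        exact ⟨⟨by omega, hxlow⟩, Or.inl hx1⟩
    have hlowp : p + 1 ≤ low := (hup ⟨p, hpn⟩).1
    have hcardM' : M'.card + (p - k) = low - 1 := by
      have h1 := Finset.card_sdiff_add_card_inter (Finset.Ico 1 low) (C ∪ T)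
      have h2 := Finset.card_sdiff_add_card_inter C T
      rw [hinter, Nat.card_Ico, ← hM'def] at h1
      have h3 : (C \ T).card = p - k := by omega
      omega
    have hkM' : k ≤ M'.card := by omega
    have hcardX : X.card = k := card_topk M' hkM'
    have hXM' : X ⊆ M' := topk_subset M' k
    have hXfacts : ∀ x ∈ X, 1 ≤ x ∧ x < low ∧ x ∉ C ∪ T := by
      intro x hx
      have := hXM' hx
      rw [hM'def, Finset.mem_sdiff, Finset.mem_Ico] at this
      exact ⟨this.1.1, this.1.2, this.2⟩
    have hdisjX : Disjoint (C ∪ T) X := by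
      rw [Finset.disjoint_right]
      intro x hx
      exact (hXfacts x hx).2.2
    have hcardCT : (C ∪ T).card + k = p + (q - p) := by
      have := Finset.card_union_add_card_inter C T
      omega
    have hcardD : (C ∪ T ∪ X).card = q := by
      rw [Finset.card_union_of_disjoint hdisjX, hcardX]
      omega
    have hDicc : C ∪ T ∪ X ⊆ Finset.Icc 1 n := by
      intro x hx
      rcases Finset.mem_union.1 hx with hx | hx
      · rcases Finset.mem_union.1 hx with hx | hx
        · exact ihicc hx
        · exact hTicc hx
      · have h1 := hXfacts x hx
        have h2 : low ≤ n := (hup ⟨p, hpn⟩).2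
        simp only [Finset.mem_Icc]
        omega
    have hDT : ∀ x ∈ C ∪ T ∪ X, x ∉ T → x < low := by
      intro x hx hxT
      rcases Finset.mem_union.1 hx with hx | hx
      · rcases Finset.mem_union.1 hx with hx | hx
        · by_contra hh
          push_neg at hh
          exact hxT (hF2 x hx hh)
        · exact absurd hx hxT
      · exact (hXfacts x hx).2.1
    have hTD : T ⊆ C ∪ T ∪ X := fun x hx =>
      Finset.mem_union_left _ (Finset.mem_union_right _ hx)
    have hCD : C ⊆ C ∪ T ∪ X := fun x hx =>
      Finset.mem_union_left _ (Finset.mem_union_left _ hx)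
    -- F7 : top part of D is given by γ
    have hnth_top : ∀ i : Fin n, p ≤ i.val → i.val < q → nth (C ∪ T ∪ X) i.val = γ i := by
      intro i hpi hiq
      have hγiT : γ i ∈ T := (mem_carrelT _).2 ⟨i, hpi, hiq, rfl⟩
      apply nth_eq_of_card_filter_lt (hTD hγiT)
      have hlowγi : low ≤ γ i := hTlow _ hγiT
      have hsplit : (C ∪ T ∪ X).filter (· < γ i) =
          ((C ∪ T ∪ X) \ T) ∪ (T.filter (· < γ i)) := by
        ext x
        constructor
        · intro hx
          rw [Finset.mem_filter] at hx
          by_cases hxT : x ∈ T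
          · exact Finset.mem_union_right _ (Finset.mem_filter.2 ⟨hxT, hx.2⟩)
          · exact Finset.mem_union_left _ (Finset.mem_sdiff.2 ⟨hx.1, hxT⟩)
        · intro hx
          rcases Finset.mem_union.1 hx with hx | hx
          · rw [Finset.mem_sdiff] at hx
            exact Finset.mem_filter.2 ⟨hx.1, by have := hDT x hx.1 hx.2; omega⟩
          · rw [Finset.mem_filter] at hx
            exact Finset.mem_filter.2 ⟨hTD hx.1, hx.2⟩
      have hdisj2 : Disjoint ((C ∪ T ∪ X) \ T) (T.filter (· < γ i)) := by
        rw [Finset.disjoint_right]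
        intro x hx
        rw [Finset.mem_sdiff]
        push_neg
        intro _
        exact (Finset.mem_filter.1 hx).1
      have hcard_sd : ((C ∪ T ∪ X) \ T).card = p := by
        rw [Finset.card_sdiff_of_subset hTD, hcardD, hcardT]
        omega
      have hTfil : T.filter (· < γ i) = carrelT γ p i.val := by
        ext x
        simp only [Finset.mem_filter]
        constructor
        · rintro ⟨hx1, hx2⟩
          obtain ⟨j, hj1, hj2, rfl⟩ := (mem_carrelT _).1 hx1
          refine (mem_carrelT _).2 ⟨j, hj1, ?_, rfl⟩
          by_contra hh
          push_neg at hh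
          rcases eq_or_lt_of_le hh with h | h
          · have : i = j := Fin.val_injective h
            subst this
            omega
          · have := gamma_lt_of_carrel γ hinc hpdef hpi h hj2
            omega
        · intro hx
          obtain ⟨j, hj1, hj2, rfl⟩ := (mem_carrelT _).1 hx
          refine ⟨(mem_carrelT _).2 ⟨j, hj1, by omega, rfl⟩, ?_⟩
          exact gamma_lt_of_carrel γ hinc hpdef hj1 hj2 hiq
      have hcardTfil : (T.filter (· < γ i)).card = i.val - p := by
        rw [hTfil]
        exact card_carrelT_gen γ hinc hpdef (by omega) (by omega)
      rw [hsplit, Finset.card_union_of_disjoint hdisj2, hcard_sd, hcardTfil]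
      omega
    have hmaxD : ∀ x ∈ C ∪ T ∪ X, ∀ h1 : q - 1 < n, x ≤ γ ⟨q - 1, h1⟩ := by
      intro x hx h1
      have h2 := le_nth_last hx
      rw [hcardD] at h2
      have h3 := hnth_top ⟨q - 1, h1⟩ (by show p ≤ q - 1; omega) (by show q - 1 < q; omega)
      rw [h3] at h2
      exact h2
    rw [hD]
    exact ⟨hcardD, hDicc, fun i h1 h2 => hnth_top i h1 h2, hmaxD, hCD⟩

end ChainInv

lemma cut_le_n (hR : R ⊆ Finset.Ico 1 n) {q : ℕ} (h : q = 0 ∨ q ∈ insert n R) : q ≤ n := by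
  rcases h with h | h
  · omega
  · rcases Finset.mem_insert.1 h with h | h
    · omega
    · have := hR h
      simp only [Finset.mem_Ico] at this
      omega

lemma cut_le_prevCut (hR : R ⊆ Finset.Ico 1 n) {q q' : ℕ} (hq : q = 0 ∨ q ∈ insert n R)
    (hq' : q' ≤ n) (hlt : q < q') : q ≤ prevCut R q' := by
  rcases hq with h | h
  · omega
  · rcases Finset.mem_insert.1 h with h | h
    · omega
    · exact le_prevCut (Finset.mem_insert_of_mem h) hlt

lemma chain_mono (hup : IsUpperTuple n γ) (hinc : IsRIncr n R γ) (hgap : GaplessCond n R γ)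
    (hR : R ⊆ Finset.Ico 1 n) :
    ∀ q', (q' = 0 ∨ q' ∈ insert n R) → ∀ q, (q = 0 ∨ q ∈ insert n R) → q ≤ q' →
      chainFn R γ q ⊆ chainFn R γ q' := by
  intro q'
  induction q' using Nat.strong_induction_on with
  | _ q' IH =>
  intro hcut' q hcut hle
  rcases eq_or_lt_of_le hle with rfl | hlt
  · exact fun a ha => ha
  · have hq'0 : 0 < q' := by omega
    have hq'n : q' ≤ n := cut_le_n hR hcut'
    have hp' : q ≤ prevCut R q' := cut_le_prevCut hR hcut hq'n hlt
    have hpcut' : prevCut R q' = 0 ∨ prevCut R q' ∈ insert n R := by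
      rcases Finset.mem_insert.1 (prevCut_mem (R := R) hq'0) with h | h
      · exact Or.inl h
      · exact Or.inr (Finset.mem_insert_of_mem h)
    have h1 := IH (prevCut R q') (prevCut_lt hq'0) hpcut' q hcut hp'
    have h2 := (chain_inv hup hinc hgap hR q' hcut').2.2.2.2
    exact h1.trans h2

/-- key avoidance invariant of the constructed chain. -/
lemma chain_inv2 (hup : IsUpperTuple n γ) (hinc : IsRIncr n R γ) (hgap : GaplessCond n R γ)
    (hR : R ⊆ Finset.Ico 1 n) :
    ∀ q', (q' = 0 ∨ q' ∈ insert n R) → ∀ q, (q = 0 ∨ q ∈ insert n R) → q ≤ q' →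
      ∀ y ∈ chainFn R γ q', y ∉ chainFn R γ q →
      ∀ z, 1 ≤ z → z ∉ chainFn R γ q' → y < z →
      ∀ x ∈ chainFn R γ q, x < z := by
  intro q'
  induction q' using Nat.strong_induction_on with
  | _ q' IH =>
  intro hcut' q hcut hle y hy hynq z hz1 hznq' hyz x hx
  rcases eq_or_lt_of_le hle with rfl | hlt
  · exact absurd hy hynq
  · have hq'0 : 0 < q' := by omega
    have hq'ne : q' ≠ 0 := by omega
    have hq'n : q' ≤ n := cut_le_n hR hcut'
    set p' := prevCut R q' with hp'def
    have hp'lt : p' < q' := prevCut_lt hq'0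
    have hp'n : p' < n := by omega
    have hqp' : q ≤ p' := cut_le_prevCut hR hcut hq'n hlt
    have hpcut' : p' = 0 ∨ p' ∈ insert n R := by
      rcases Finset.mem_insert.1 (prevCut_mem (R := R) hq'0) with h | h
      · exact Or.inl h
      · exact Or.inr (Finset.mem_insert_of_mem h)
    have hmono_pq' := (chain_inv hup hinc hgap hR q' hcut').2.2.2.2
    have hD : chainFn R γ q' = chainFn R γ p' ∪ carrelT γ p' q' ∪
        topk ((Finset.Ico 1 (γ ⟨p', hp'n⟩)) \ (chainFn R γ p' ∪ carrelT γ p' q'))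
        ((chainFn R γ p' ∩ carrelT γ p' q').card) := chainFn_pos γ hq'ne hp'n
    by_cases hyp' : y ∈ chainFn R γ p'
    · exact IH p' hp'lt hpcut' q hcut hqp' y hyp' hynq z hz1
        (fun hzz => hznq' (hmono_pq' hzz)) hyz x hx
    · -- y is new at this step
      set C := chainFn R γ p' with hCdef
      set T := carrelT γ p' q' with hTdef
      set low := γ ⟨p', hp'n⟩ with hlowdef
      have hxC : x ∈ C := chain_mono hup hinc hgap hR p' hpcut' q hcut hqp' hx
      by_cases hzlow : z < low
      · -- impossible: contradicts the choice of the top-k elements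
        exfalso
        have hzM : z ∈ (Finset.Ico 1 low) \ (C ∪ T) := by
          rw [Finset.mem_sdiff, Finset.mem_Ico]
          refine ⟨⟨hz1, hzlow⟩, fun hzz => hznq' ?_⟩
          rw [hD]
          exact Finset.mem_union_left _ hzz
        have hzX : z ∉ topk ((Finset.Ico 1 low) \ (C ∪ T)) ((C ∩ T).card) := by
          intro hzz
          apply hznq'
          rw [hD]
          exact Finset.mem_union_right _ hzz
        rw [hD] at hy
        rcases Finset.mem_union.1 hy with hy' | hy'
        · rcases Finset.mem_union.1 hy' with hy'' | hy''
          · exact hyp' hy''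
          · -- y ∈ T, but y < z < low ≤ y
            obtain ⟨i, hi1, hi2, rfl⟩ := (mem_carrelT _).1 hy''
            rcases eq_or_lt_of_le hi1 with h | h
            · have : (⟨p', hp'n⟩ : Fin n) = i := Fin.val_injective h
              rw [← this] at hyz
              omega
            · have := gamma_lt_of_carrel γ hinc hp'def (i := ⟨p', hp'n⟩) (le_refl p') h hi2
              omega
        · -- y ∈ X
          have := lt_of_not_mem_topk hzM hzX hy'
          omega
      · -- z ≥ low : show every x ∈ C is < z
        push_neg at hzlow
        by_contra hh
        push_neg at hh
        -- low ≤ z ≤ x, x ∈ C ⊆ chain p'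
        have hp'0 : 0 < p' := by
          by_contra hp00
          push_neg at hp00
          have : C = ∅ := by rw [hCdef, show p' = 0 by omega, chainFn_zero]
          rw [this] at hxC
          simp at hxC
        have hp'R : p' ∈ R := by
          rcases Finset.mem_insert.1 (prevCut_mem (R := R) hq'0) with h | h
          · omega
          · exact h
        have hxmax := (chain_inv hup hinc hgap hR p' hpcut').2.2.2.1 x hxC (by omega)
        have hzT : z ∈ T :=
          run_subset hgap hp'def (hcut'.resolve_left hq'ne) hq'n hp'R hp'0 hp'n (by omega)
            (by have := (hup ⟨p', hp'n⟩).1; omega) hzlow (by omega)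
        apply hznq'
        rw [hD]
        exact Finset.mem_union_left _ (Finset.mem_union_right _ hzT)

section Perm

variable {γ : Fin n → ℕ}

/-- value (1-indexed) that the constructed permutation takes at position `i`. -/
noncomputable def permVal (R : Finset ℕ) (γ : Fin n → ℕ) (i : Fin n) : ℕ :=
  nth (chainFn R γ (carrelEnd n R i) \ chainFn R γ (prevCut R (carrelEnd n R i)))
    (i.val - prevCut R (carrelEnd n R i))

lemma cutE (i : Fin n) : carrelEnd n R i = 0 ∨ carrelEnd n R i ∈ insert n R :=
  Or.inr (carrelEnd_mem i)

lemma prevCut_cut {q : ℕ} (h0 : 0 < q) : prevCut R q = 0 ∨ prevCut R q ∈ insert n R := by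
  rcases Finset.mem_insert.1 (prevCut_mem (R := R) h0) with h | h
  · exact Or.inl h
  · exact Or.inr (Finset.mem_insert_of_mem h)

variable (hup : IsUpperTuple n γ) (hinc : IsRIncr n R γ) (hgap : GaplessCond n R γ)
  (hR : R ⊆ Finset.Ico 1 n)

include hup hinc hgap hR

lemma diff_card (i : Fin n) :
    (chainFn R γ (carrelEnd n R i) \ chainFn R γ (prevCut R (carrelEnd n R i))).card =
      carrelEnd n R i - prevCut R (carrelEnd n R i) := by
  have h0 : 0 < carrelEnd n R i := by have := lt_carrelEnd (R := R) i; omega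
  have hsub := (chain_inv hup hinc hgap hR _ (cutE i)).2.2.2.2
  rw [Finset.card_sdiff_of_subset hsub, (chain_inv hup hinc hgap hR _ (cutE i)).1,
    (chain_inv hup hinc hgap hR _ (prevCut_cut h0)).1]

lemma permVal_mem (i : Fin n) :
    permVal R γ i ∈
      chainFn R γ (carrelEnd n R i) \ chainFn R γ (prevCut R (carrelEnd n R i)) := by
  apply nth_mem
  rw [diff_card hup hinc hgap hR i]
  have h1 := prevCut_carrelEnd_le (R := R) i
  have h2 := lt_carrelEnd (R := R) i
  omega

lemma permVal_Icc (i : Fin n) : 1 ≤ permVal R γ i ∧ permVal R γ i ≤ n := by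
  have h1 := permVal_mem hup hinc hgap hR i
  rw [Finset.mem_sdiff] at h1
  have h2 := (chain_inv hup hinc hgap hR _ (cutE i)).2.1 h1.1
  simp only [Finset.mem_Icc] at h2
  exact h2

lemma permVal_lt {i j : Fin n} (hij : i.val < j.val)
    (hE : carrelEnd n R i = carrelEnd n R j) : permVal R γ i < permVal R γ j := by
  unfold permVal
  rw [hE]
  have h1 := prevCut_carrelEnd_le (R := R) i
  rw [hE] at h1
  have h2 := lt_carrelEnd (R := R) j
  have h3 := prevCut_carrelEnd_le (R := R) j
  apply nth_lt_nth
  · omega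
  · rw [diff_card hup hinc hgap hR j]
    omega

lemma permVal_injective : Function.Injective (permVal R γ) := by
  intro i j hij
  by_contra hne
  have hne' : i.val ≠ j.val := fun h => hne (Fin.val_injective h)
  by_cases hE : carrelEnd n R i = carrelEnd n R j
  · rcases lt_or_gt_of_ne hne' with h | h
    · have := permVal_lt hup hinc hgap hR h hE
      omega
    · have := permVal_lt hup hinc hgap hR h hE.symm
      omega
  · -- different carrels
    have key : ∀ a b : Fin n, carrelEnd n R a < carrelEnd n R b →
        permVal R γ a ≠ permVal R γ b := by
      intro a b hab
      have hEbn : carrelEnd n R b ≤ n := carrelEnd_le_n b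
      have hEb0 : 0 < carrelEnd n R b := by have := lt_carrelEnd (R := R) b; omega
      have hle : carrelEnd n R a ≤ prevCut R (carrelEnd n R b) :=
        cut_le_prevCut hR (cutE a) hEbn hab
      have hmema := permVal_mem hup hinc hgap hR a
      have hmemb := permVal_mem hup hinc hgap hR b
      rw [Finset.mem_sdiff] at hmema hmemb
      have h3 : permVal R γ a ∈ chainFn R γ (prevCut R (carrelEnd n R b)) :=
        chain_mono hup hinc hgap hR _ (prevCut_cut hEb0) _ (cutE a) hle hmema.1
      intro hcon
      rw [hcon] at h3
      exact hmemb.2 h3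
    rcases lt_or_gt_of_ne (fun h : carrelEnd n R i = carrelEnd n R j => hE h) with h | h
    · exact key i j h hij
    · exact key j i h hij.symm

lemma vals_eq_chain {π : Equiv.Perm (Fin n)} (hπγ : ∀ i : Fin n, (π i).val + 1 = permVal R γ i) :
    ∀ q, (q = 0 ∨ q ∈ insert n R) → vals π q = chainFn R γ q := by
  intro q
  induction q using Nat.strong_induction_on with
  | _ q IH =>
  intro hcut
  by_cases hq0 : q = 0
  · subst hq0
    rw [chainFn_zero]
    ext x
    simp only [mem_vals, Finset.notMem_empty, iff_false]
    rintro ⟨j, hj, -⟩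
    omega
  · have hqn : q ≤ n := cut_le_n hR hcut
    have h0 : 0 < q := Nat.pos_of_ne_zero hq0
    have hqmem : q ∈ insert n R := hcut.resolve_left hq0
    set p := prevCut R q with hpdef
    have hplt : p < q := prevCut_lt h0
    have hpn : p < n := by omega
    have hIH := IH p hplt (prevCut_cut h0)
    have hmono := (chain_inv hup hinc hgap hR q hcut).2.2.2.2
    ext x
    constructor
    · intro hx
      obtain ⟨j, hj, rfl⟩ := mem_vals.1 hx
      by_cases hjp : j.val < p
      · exact hmono (hIH ▸ mem_vals_of_lt hjp)
      · push_neg at hjp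
        have hEj : carrelEnd n R j = q := carrelEnd_eq_of hqmem hqn (by omega) hj
        have := permVal_mem hup hinc hgap hR j
        rw [hEj, ← hπγ j] at this
        exact (Finset.mem_sdiff.1 this).1
    · intro hx
      by_cases hxp : x ∈ chainFn R γ p
      · rw [← hIH] at hxp
        exact vals_mono (by omega) hxp
      · have hxd : x ∈ chainFn R γ q \ chainFn R γ p := Finset.mem_sdiff.2 ⟨hx, hxp⟩
        obtain ⟨t, ht, hnt, -⟩ := exists_nth_eq hxd
        have hcard : (chainFn R γ q \ chainFn R γ p).card = q - p := by
          rw [Finset.card_sdiff_of_subset ((chain_inv hup hinc hgap hR q hcut).2.2.2.2),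
            (chain_inv hup hinc hgap hR q hcut).1,
            (chain_inv hup hinc hgap hR p (prevCut_cut h0)).1]
        rw [hcard] at ht
        set j : Fin n := ⟨p + t, by omega⟩ with hjdef
        have hEj : carrelEnd n R j = q :=
          carrelEnd_eq_of hqmem hqn (by show p ≤ p + t; omega) (by show p + t < q; omega)
        have hpv : permVal R γ j = x := by
          unfold permVal
          rw [hEj]
          have : j.val - prevCut R q = t := by
            simp only [hjdef]
            omega
          rw [← hpdef] at this ⊢
          rw [this, hnt]
        have : (π j).val + 1 = x := by rw [hπγ j, hpv]
        exact this ▸ mem_vals_of_lt (by show j.val < q; simp only [hjdef]; omega)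

lemma rank_of_built {π : Equiv.Perm (Fin n)}
    (hπγ : ∀ i : Fin n, (π i).val + 1 = permVal R γ i) :
    rankTuple n R π = γ := by
  funext i
  rw [rankTuple_eq, vals_eq_chain hup hinc hgap hR hπγ _ (cutE i)]
  exact (chain_inv hup hinc hgap hR _ (cutE i)).2.2.1 i (prevCut_carrelEnd_le i) (lt_carrelEnd i)

lemma built_avoids {π : Equiv.Perm (Fin n)}
    (hπγ : ∀ i : Fin n, (π i).val + 1 = permVal R γ i) :
    RAvoids312 n R π := by
  rintro ⟨a, b, c, hab, hbc, ⟨q1, hq1R, hq1a, hq1b⟩, ⟨q2, hq2R, hq2b, hq2c⟩, h1, h2, h3⟩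
  have hc1 : q1 = 0 ∨ q1 ∈ insert n R := Or.inr (Finset.mem_insert_of_mem hq1R)
  have hc2 : q2 = 0 ∨ q2 ∈ insert n R := Or.inr (Finset.mem_insert_of_mem hq2R)
  have hv1 := vals_eq_chain hup hinc hgap hR hπγ q1 hc1
  have hv2 := vals_eq_chain hup hinc hgap hR hπγ q2 hc2
  have hxmem : (π a).val + 1 ∈ chainFn R γ q1 := hv1 ▸ mem_vals_of_lt (by omega)
  have hymem : (π b).val + 1 ∈ chainFn R γ q2 := hv2 ▸ mem_vals_of_lt (by omega)
  have hynot : (π b).val + 1 ∉ chainFn R γ q1 := hv1 ▸ not_mem_vals (by omega)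
  have hznot : (π c).val + 1 ∉ chainFn R γ q2 := hv2 ▸ not_mem_vals (by omega)
  have hkey := chain_inv2 hup hinc hgap hR q2 hc2 q1 hc1 (by omega)
    ((π b).val + 1) hymem hynot ((π c).val + 1) (by omega) hznot
    (by have : π b < π c := h2; omega)
    ((π a).val + 1) hxmem
  have : π c < π a := h3
  omega

end Perm

section Unique

variable {π : Equiv.Perm (Fin n)}

lemma carrelT_filter (ν : Fin n → ℕ) (hinc' : IsRIncr n R ν) {p q : ℕ}
    (hpq : p = prevCut R q) {i : Fin n} (hpi : p ≤ i.val) (hiq : i.val < q) :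
    (carrelT ν p q).filter (· < ν i) = carrelT ν p i.val := by
  ext x
  simp only [Finset.mem_filter]
  constructor
  · rintro ⟨hx1, hx2⟩
    obtain ⟨j, hj1, hj2, rfl⟩ := (mem_carrelT _).1 hx1
    refine (mem_carrelT _).2 ⟨j, hj1, ?_, rfl⟩
    by_contra hh
    push_neg at hh
    rcases eq_or_lt_of_le hh with h | h
    · have : i = j := Fin.val_injective h
      subst this
      omega
    · have := gamma_lt_of_carrel ν hinc' hpq hpi h hj2
      omega
  · intro hx
    obtain ⟨j, hj1, hj2, rfl⟩ := (mem_carrelT _).1 hx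
    refine ⟨(mem_carrelT _).2 ⟨j, hj1, by omega, rfl⟩, ?_⟩
    exact gamma_lt_of_carrel ν hinc' hpq hj1 hj2 hiq

lemma perm_isRIncr (hπ : IsRPerm n R π) : IsRIncr n R (fun j => (π j).val + 1) := by
  intro i j hij hr
  have h : π i < π j := hπ i j hij hr
  show (π i).val + 1 < (π j).val + 1
  have := Fin.lt_def.1 h
  omega

lemma vals_diff_eq (hπ : IsRPerm n R π) {p q : ℕ} (hpq : p = prevCut R q) :
    vals π q \ vals π p = carrelT (fun j => (π j).val + 1) p q := by
  ext x
  rw [Finset.mem_sdiff]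
  constructor
  · rintro ⟨hx1, hx2⟩
    obtain ⟨j, hj, rfl⟩ := mem_vals.1 hx1
    refine (mem_carrelT _).2 ⟨j, ?_, hj, rfl⟩
    by_contra hh
    push_neg at hh
    exact hx2 (mem_vals_of_lt hh)
  · intro hx
    obtain ⟨j, hj1, hj2, rfl⟩ := (mem_carrelT _).1 hx
    exact ⟨mem_vals_of_lt hj2, not_mem_vals hj1⟩

/-- an R-permutation is determined within each carrel by the sets `vals`. -/
lemma perm_determined (hπ : IsRPerm n R π) (i : Fin n) :
    (π i).val + 1 = nth (vals π (carrelEnd n R i) \ vals π (prevCut R (carrelEnd n R i)))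
      (i.val - prevCut R (carrelEnd n R i)) := by
  set q := carrelEnd n R i with hqdef
  set p := prevCut R q with hpdef
  have hpi : p ≤ i.val := prevCut_carrelEnd_le i
  have hiq : i.val < q := lt_carrelEnd i
  have hdiff := vals_diff_eq hπ (q := q) hpdef
  rw [hdiff]
  symm
  apply nth_eq_of_card_filter_lt ((mem_carrelT _).2 ⟨i, hpi, hiq, rfl⟩)
  rw [carrelT_filter _ (perm_isRIncr hπ) hpdef hpi hiq]
  exact card_carrelT_gen _ (perm_isRIncr hπ) hpdef (by omega) (by omega)

/-- uniqueness: for an R-312-avoiding R-permutation the chain of value-sets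
is determined by the rank tuple. -/
lemma vals_eq_chain_of_avoid (hR : R ⊆ Finset.Ico 1 n) (hπ : IsRPerm n R π)
    (hav : RAvoids312 n R π) :
    ∀ q, (q = 0 ∨ q ∈ insert n R) → vals π q = chainFn R (rankTuple n R π) q := by
  set γ := rankTuple n R π with hγdef
  have hinc : IsRIncr n R γ := fun i j hij hr => psi_incr hij hr
  intro q
  induction q using Nat.strong_induction_on with
  | _ q IH =>
  intro hcut
  by_cases hq0 : q = 0
  · subst hq0
    rw [chainFn_zero]
    ext x
    simp only [mem_vals, Finset.notMem_empty, iff_false]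
    rintro ⟨j, hj, -⟩
    omega
  · have hqn : q ≤ n := cut_le_n hR hcut
    have h0 : 0 < q := Nat.pos_of_ne_zero hq0
    have hqmem : q ∈ insert n R := hcut.resolve_left hq0
    set p := prevCut R q with hpdef
    have hplt : p < q := prevCut_lt h0
    have hpn : p < n := by omega
    have hIH := IH p hplt (prevCut_cut h0)
    set C := vals π p with hCdef
    set T := carrelT γ p q with hTdef
    set low := γ ⟨p, hpn⟩ with hlowdef
    set M' := (Finset.Ico 1 low) \ (C ∪ T) with hM'def
    set k := (C ∩ T).card with hkdef
    set Xπ := vals π q \ (C ∪ T) with hXdef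
    have hcardvq : (vals π q).card = q := card_vals hqn
    -- the top part of `vals π q` is γ
    have htop : ∀ i : Fin n, p ≤ i.val → i.val < q → nth (vals π q) i.val = γ i := by
      intro i h1 h2
      have hEi : carrelEnd n R i = q := carrelEnd_eq_of hqmem hqn (by omega) h2
      rw [hγdef]
      conv_rhs => rw [rankTuple_eq]
      rw [hEi]
    have hTsub : T ⊆ vals π q := by
      intro x hx
      obtain ⟨i, hi1, hi2, rfl⟩ := (mem_carrelT _).1 hx
      rw [← htop i hi1 hi2]
      exact nth_mem _ (by omega)
    have hTlow : ∀ x ∈ T, low ≤ x := by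
      intro x hx
      obtain ⟨i, hi1, hi2, rfl⟩ := (mem_carrelT _).1 hx
      rcases eq_or_lt_of_le hi1 with h | h
      · have : (⟨p, hpn⟩ : Fin n) = i := Fin.val_injective h
        rw [hlowdef, this]
      · exact le_of_lt (gamma_lt_of_carrel γ hinc hpdef (i := ⟨p, hpn⟩) (le_refl p) h hi2)
    have hlow_out : ∀ x ∈ vals π q, x ∉ T → x < low := by
      intro x hx hxT
      obtain ⟨t, ht, hnt, -⟩ := exists_nth_eq hx
      rw [hcardvq] at ht
      by_cases htp : t < p
      · have hlow_eq : nth (vals π q) p = low := htop ⟨p, hpn⟩ (le_refl p) hplt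
        have := nth_lt_nth (vals π q) htp (by omega)
        rw [hnt, hlow_eq] at this
        exact this
      · exfalso
        push_neg at htp
        have hteq := htop ⟨t, by omega⟩ htp ht
        rw [hnt] at hteq
        exact hxT ((mem_carrelT _).2 ⟨⟨t, by omega⟩, htp, ht, hteq.symm⟩)
    have hCsub : C ⊆ vals π q := vals_mono (by omega)
    have hcardC : C.card = p := card_vals (by omega)
    have hcardT : T.card = q - p := card_carrelT_gen γ hinc hpdef (le_refl q) hqn
    have hCTsub : C ∪ T ⊆ vals π q := Finset.union_subset hCsub hTsub
    have hkp : k ≤ p := by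
      rw [hkdef, ← hcardC]
      exact Finset.card_le_card Finset.inter_subset_left
    have hcardX : Xπ.card = k := by
      rw [hXdef, Finset.card_sdiff_of_subset hCTsub, hcardvq]
      have := Finset.card_union_add_card_inter C T
      omega
    have hXsubM : Xπ ⊆ M' := by
      intro x hx
      rw [hXdef, Finset.mem_sdiff] at hx
      rw [hM'def, Finset.mem_sdiff, Finset.mem_Ico]
      have hx1 := Finset.mem_Icc.1 (vals_subset_Icc hx.1)
      refine ⟨⟨hx1.1, ?_⟩, hx.2⟩
      exact hlow_out x hx.1 (fun hxT => hx.2 (Finset.mem_union_right _ hxT))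
    have hkM : k ≤ M'.card := hcardX ▸ Finset.card_le_card hXsubM
    have hXtop : Xπ = topk M' k := by
      by_contra hne
      have hcardtop : (topk M' k).card = k := card_topk M' hkM
      have hz : ∃ z ∈ topk M' k, z ∉ Xπ := by
        by_contra hno
        push_neg at hno
        exact hne (Finset.eq_of_subset_of_card_le hno (by omega)).symm
      have hw : ∃ w ∈ Xπ, w ∉ topk M' k := by
        by_contra hno
        push_neg at hno
        exact hne (Finset.eq_of_subset_of_card_le hno (by omega))
      obtain ⟨z, hztop, hzX⟩ := hz
      obtain ⟨w, hwX, hwtop⟩ := hw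
      have hwz : w < z := lt_of_not_mem_topk (hXsubM hwX) hwtop hztop
      have hzM := topk_subset M' k hztop
      rw [hM'def, Finset.mem_sdiff, Finset.mem_Ico] at hzM
      have hzvq : z ∉ vals π q := by
        intro hzz
        exact hzX (hXdef ▸ Finset.mem_sdiff.2 ⟨hzz, hzM.2⟩)
      have hk0 : 0 < k := by
        rcases Nat.eq_zero_or_pos k with h | h
        · exfalso
          rw [h] at hztop hcardtop
          rw [Finset.card_eq_zero.1 hcardtop] at hztop
          simp at hztop
        · exact h
      obtain ⟨x0, hx0⟩ : (C ∩ T).Nonempty := by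
        rw [← Finset.card_pos]
        omega
      rw [Finset.mem_inter] at hx0
      have hx0low := hTlow x0 hx0.2
      -- build the forbidden pattern
      obtain ⟨a, ha1, ha2⟩ := mem_vals.1 hx0.1
      have hwvq : w ∈ vals π q := by
        rw [hXdef, Finset.mem_sdiff] at hwX
        exact hwX.1
      obtain ⟨b, hb1, hb2⟩ := mem_vals.1 hwvq
      have hbp : p ≤ b.val := by
        by_contra hh
        push_neg at hh
        rw [hXdef, Finset.mem_sdiff] at hwX
        exact hwX.2 (Finset.mem_union_left _ (hb2 ▸ mem_vals_of_lt hh))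
      have hlown : low ≤ n := (psi_upper (π := π) ⟨p, hpn⟩).2
      obtain ⟨c, hc1, hc2⟩ := exists_of_not_mem_vals
        (by omega) (by omega) hzvq
      have hp0 : 0 < p := by omega
      have hpR : p ∈ R := by
        rcases Finset.mem_insert.1 (prevCut_mem (R := R) h0) with h | h
        · omega
        · exact h
      have hqR : q ∈ R := by
        rcases Finset.mem_insert.1 hqmem with h | h
        · exfalso
          have := c.isLt
          omega
        · exact h
      apply hav
      refine ⟨a, b, c, Fin.lt_def.2 (by omega), Fin.lt_def.2 (by omega),
        ⟨p, hpR, by omega⟩, ⟨q, hqR, by omega⟩,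
        Fin.lt_def.2 (by omega), Fin.lt_def.2 (by omega), Fin.lt_def.2 (by omega)⟩
    have hfinal : vals π q = C ∪ T ∪ Xπ := by
      ext x
      constructor
      · intro hx
        by_cases hxCT : x ∈ C ∪ T
        · exact Finset.mem_union_left _ hxCT
        · exact Finset.mem_union_right _ (hXdef ▸ Finset.mem_sdiff.2 ⟨hx, hxCT⟩)
      · intro hx
        rcases Finset.mem_union.1 hx with hx | hx
        · exact hCTsub hx
        · rw [hXdef, Finset.mem_sdiff] at hx
          exact hx.1
    have hXtop' : vals π q \ (chainFn R γ p ∪ T) =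
        topk (Finset.Ico 1 low \ (chainFn R γ p ∪ T)) ((chainFn R γ p ∩ T).card) := by
      rw [← hIH]
      exact hXtop
    have hfinal' : vals π q =
        chainFn R γ p ∪ T ∪ (vals π q \ (chainFn R γ p ∪ T)) := by
      rw [← hIH]
      exact hfinal
    rw [hXtop'] at hfinal'
    rw [chainFn_pos γ hq0 hpn]
    exact hfinal'

end Unique

end Stmt7

/-- The restriction of the rank R-tuple map Ψ_R to the set of R-312-avoiding
R-permutations is a bijection onto the set of gapless R-tuples. -/
theorem stmt7 (n : ℕ) (R : Finset ℕ) (hR : R ⊆ Finset.Ico 1 n) :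
    Set.BijOn (rankTuple n R)
      {π : Equiv.Perm (Fin n) | IsRPerm n R π ∧ RAvoids312 n R π}
      {γ : Fin n → ℕ | IsRIncrUpper n R γ ∧ GaplessCond n R γ} := by
  refine ⟨?_, ?_, ?_⟩
  · -- MapsTo
    intro π hπ
    exact ⟨⟨fun i => Stmt7.psi_upper i, fun i j h1 h2 => Stmt7.psi_incr h1 h2⟩,
      Stmt7.psi_gapless hπ.2⟩
  · -- InjOn
    intro π hπ π' hπ' heq
    have h1 := Stmt7.vals_eq_chain_of_avoid hR hπ.1 hπ.2
    have h2 := Stmt7.vals_eq_chain_of_avoid hR hπ'.1 hπ'.2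
    rw [heq] at h1
    have hvals : ∀ q, (q = 0 ∨ q ∈ insert n R) → Stmt7.vals π q = Stmt7.vals π' q :=
      fun q hq => (h1 q hq).trans (h2 q hq).symm
    apply Equiv.ext
    intro i
    have hE0 : 0 < carrelEnd n R i := by
      have := Stmt7.lt_carrelEnd (R := R) i
      omega
    have e1 := Stmt7.perm_determined hπ.1 i
    have e2 := Stmt7.perm_determined hπ'.1 i
    rw [hvals _ (Stmt7.cutE i), hvals _ (Stmt7.prevCut_cut hE0)] at e1
    apply Fin.val_injective
    omega
  · -- SurjOn
    intro γ hγ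
    obtain ⟨⟨hup, hinc⟩, hgap⟩ := hγ
    have hIcc := fun i => Stmt7.permVal_Icc hup hinc hgap hR i
    set g : Fin n → Fin n := fun i =>
      ⟨Stmt7.permVal R γ i - 1, by have := hIcc i; omega⟩ with hgdef
    have hginj : Function.Injective g := by
      intro i j hij
      apply Stmt7.permVal_injective hup hinc hgap hR
      have h1 := hIcc i
      have h2 := hIcc j
      have h3 : (g i).val = (g j).val := by rw [hij]
      simp only [hgdef] at h3
      omega
    set π : Equiv.Perm (Fin n) := Equiv.ofBijective g (Finite.injective_iff_bijective.1 hginj)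
      with hπdef
    have hπγ : ∀ i : Fin n, (π i).val + 1 = Stmt7.permVal R γ i := by
      intro i
      have h1 := hIcc i
      show (g i).val + 1 = _
      simp only [hgdef]
      omega
    have hperm : IsRPerm n R π := by
      intro i j hij hr
      have hE := Stmt7.carrelEnd_succ (R := R) hij hr
      have hlt := Stmt7.permVal_lt hup hinc hgap hR (show i.val < j.val by omega) hE.symm
      have e1 := hπγ i
      have e2 := hπγ j
      exact Fin.lt_def.2 (by omega)
    exact ⟨π, ⟨hperm, Stmt7.built_avoids hup hinc hgap hR hπγ⟩,
      Stmt7.rank_of_built hup hinc hgap hR hπγ⟩
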